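/- There exists a constant C such that for every λ with 0 < |λ| < 1/2 and every r ≥ 1, e^{-r} · ∫_ℝ (e^{-2r} + t²)^{-(2λ+1)/2} · (1 + e^{-2r} t²)^{(2λ-1)/2} dt ≤ (C/|λ|) · e^{-r(1-2|λ|)}. -/

import Mathlib

open Real MeasureTheory Set

set_option maxHeartbeats 1000000 in
theorem complementary_series_integral_estimate :
    ∃ C : ℝ, ∀ l r : ℝ, 0 < |l| → |l| < 1 / 2 → 1 ≤ r →
      Real.exp (-r) *
          ∫ t : ℝ, (Real.exp (-2 * r) + t ^ 2) ^ (-(2 * l + 1) / 2 : ℝ) *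
            (1 + Real.exp (-2 * r) * t ^ 2) ^ ((2 * l - 1) / 2 : ℝ)
        ≤ (C / |l|) * Real.exp (-r * (1 - 2 * |l|)) := by
  use 3
  intro l r hl hl2 hr
  have hr0 : (0:ℝ) < r := lt_of_lt_of_le one_pos hr
  set m : ℝ := |l| with hm
  have hm0 : 0 < m := hl
  have hm2 : m < 1/2 := hl2
  have hlm : l ≤ m := le_abs_self l
  have hlm' : -m ≤ l := neg_abs_le l
  set a : ℝ := 2 * l with ha
  have hl0 : l ≠ 0 := by intro h; rw [hm, h, abs_zero] at hm0; exact lt_irrefl 0 hm0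
  have hane : a ≠ 0 := by rw [ha]; exact mul_ne_zero two_ne_zero hl0
  set E : ℝ := Real.exp (-2 * r) with hE
  set A : ℝ := Real.exp (-r) with hA
  set B : ℝ := Real.exp r with hB
  have hE0 : 0 < E := exp_pos _
  have hA0 : 0 < A := exp_pos _
  have hB0 : 0 < B := exp_pos _
  have hAB : A ≤ B := exp_le_exp.mpr (by linarith)
  set p : ℝ := -(2 * l + 1) / 2 with hp
  set q : ℝ := (2 * l - 1) / 2 with hq
  have hp0 : p < 0 := by rw [hp]; linarith
  have hq0 : q < 0 := by rw [hq]; linarith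
  set F : ℝ → ℝ := fun s => (E + s ^ 2) ^ p * (1 + E * s ^ 2) ^ q with hF
  set G : ℝ → ℝ := fun s =>
    if s ≤ A then Real.exp (r * (a + 1))
    else if s ≤ B then s ^ (-(a + 1))
    else Real.exp (r * (1 - a)) * s ^ (-2 : ℝ) with hG
  -- the integral as an integral over (0, ∞)
  have key : (∫ t : ℝ, (E + t ^ 2) ^ p * (1 + E * t ^ 2) ^ q)
      = 2 * ∫ s in Ioi (0:ℝ), F s := by
    rw [← integral_comp_abs (f := F)]
    congr 1
    funext t
    simp only [hF, sq_abs]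
  -- nonnegativity of F
  have hF0 : ∀ s : ℝ, 0 ≤ F s := by
    intro s
    exact mul_nonneg (rpow_nonneg (by positivity) _) (rpow_nonneg (by positivity) _)
  -- pointwise bound F ≤ G on (0, ∞)
  have hFG : ∀ s ∈ Ioi (0:ℝ), F s ≤ G s := by
    intro s hs
    have hs0 : 0 < s := hs
    have hsq : (0:ℝ) < s ^ 2 := by positivity
    have h1p : (1:ℝ) ≤ 1 + E * s ^ 2 := by nlinarith
    have hY1 : (1 + E * s ^ 2) ^ q ≤ 1 := rpow_le_one_of_one_le_of_nonpos h1p hq0.le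
    have hYnn : 0 ≤ (1 + E * s ^ 2) ^ q := rpow_nonneg (by linarith) _
    have hXs : (E + s ^ 2) ^ p ≤ s ^ (2 * p) := by
      have h' : (E + s ^ 2) ^ p ≤ ((s:ℝ) ^ 2) ^ p :=
        rpow_le_rpow_of_nonpos hsq (by nlinarith) hp0.le
      calc (E + s ^ 2) ^ p ≤ ((s:ℝ) ^ 2) ^ p := h'
        _ = s ^ (2 * p) := by
            rw [← Real.rpow_natCast s 2, ← Real.rpow_mul hs0.le]
            norm_num
    by_cases h1 : s ≤ A
    · have hX : (E + s ^ 2) ^ p ≤ E ^ p :=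
        rpow_le_rpow_of_nonpos hE0 (by nlinarith) hp0.le
      have hEp : E ^ p = Real.exp (r * (a + 1)) := by
        rw [hE, ← Real.exp_mul]
        congr 1
        rw [hp, ha]; ring
      simp only [hG, if_pos h1]
      calc F s ≤ E ^ p * 1 :=
            mul_le_mul hX hY1 hYnn (rpow_nonneg hE0.le _)
        _ = Real.exp (r * (a + 1)) := by rw [mul_one, hEp]
    · by_cases h2 : s ≤ B
      · simp only [hG, if_neg h1, if_pos h2]
        have h2p : 2 * p = -(a + 1) := by rw [hp, ha]; ring
        calc F s ≤ s ^ (2 * p) * 1 :=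
              mul_le_mul hXs hY1 hYnn (rpow_nonneg hs0.le _)
          _ = s ^ (-(a + 1)) := by rw [mul_one, h2p]
      · simp only [hG, if_neg h1, if_neg h2]
        have hY : (1 + E * s ^ 2) ^ q ≤ E ^ q * s ^ (2 * q) := by
          have h' : (1 + E * s ^ 2) ^ q ≤ (E * s ^ 2) ^ q :=
            rpow_le_rpow_of_nonpos (by positivity) (by linarith) hq0.le
          calc (1 + E * s ^ 2) ^ q ≤ (E * s ^ 2) ^ q := h'
            _ = E ^ q * s ^ (2 * q) := by
                rw [Real.mul_rpow hE0.le hsq.le, ← Real.rpow_natCast s 2,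
                  ← Real.rpow_mul hs0.le]
                norm_num
        have hEq : E ^ q = Real.exp (r * (1 - a)) := by
          rw [hE, ← Real.exp_mul]
          congr 1
          rw [hq, ha]; ring
        have hpq : 2 * p + 2 * q = (-2 : ℝ) := by rw [hp, hq]; ring
        calc F s ≤ s ^ (2 * p) * (E ^ q * s ^ (2 * q)) :=
              mul_le_mul hXs hY hYnn (rpow_nonneg hs0.le _)
          _ = E ^ q * (s ^ (2 * p) * s ^ (2 * q)) := by ring
          _ = E ^ q * s ^ (2 * p + 2 * q) := by rw [← Real.rpow_add hs0]
          _ = Real.exp (r * (1 - a)) * s ^ (-2 : ℝ) := by rw [hEq, hpq]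
  -- G on the pieces
  have hG1 : EqOn G (fun _ => Real.exp (r * (a + 1))) (Ioc 0 A) := by
    intro s hs; simp only [hG]; rw [if_pos hs.2]
  have hG2 : EqOn G (fun s => s ^ (-(a + 1))) (Ioc A B) := by
    intro s hs; simp only [hG]; rw [if_neg (not_le.mpr hs.1), if_pos hs.2]
  have hG3 : EqOn G (fun s => Real.exp (r * (1 - a)) * s ^ (-2 : ℝ)) (Ioi B) := by
    intro s hs
    have h1 : ¬ s ≤ A := not_le.mpr (lt_of_le_of_lt hAB hs)
    have h2 : ¬ s ≤ B := not_le.mpr hs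
    simp only [hG]; rw [if_neg h1, if_neg h2]
  -- integrability of G on the pieces
  have hI1 : IntegrableOn G (Ioc 0 A) :=
    (integrableOn_const measure_Ioc_lt_top.ne).congr_fun
      hG1.symm measurableSet_Ioc
  have hI2 : IntegrableOn G (Ioc A B) := by
    have : IntervalIntegrable (fun s : ℝ => s ^ (-(a + 1))) volume A B :=
      intervalIntegral.intervalIntegrable_rpow (Or.inr (notMem_uIcc_of_lt hA0 hB0))
    exact ((intervalIntegrable_iff_integrableOn_Ioc_of_le hAB).mp this).congr_fun
      hG2.symm measurableSet_Ioc
  have hI3 : IntegrableOn G (Ioi B) := by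
    have h0 : IntegrableOn (fun s : ℝ => s ^ (-2 : ℝ)) (Ioi B) :=
      integrableOn_Ioi_rpow_of_lt (by norm_num) hB0
    have h1 : IntegrableOn (fun s : ℝ => Real.exp (r * (1 - a)) * s ^ (-2 : ℝ)) (Ioi B) :=
      h0.const_mul _
    exact h1.congr_fun hG3.symm measurableSet_Ioi
  have hsplit : Ioi (0:ℝ) = Ioc 0 A ∪ (Ioc A B ∪ Ioi B) := by
    rw [Ioc_union_Ioi_eq_Ioi hAB, Ioc_union_Ioi_eq_Ioi hA0.le]
  have disj2 : Disjoint (Ioc A B) (Ioi B) := Ioc_disjoint_Ioi le_rfl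
  have disj1 : Disjoint (Ioc (0:ℝ) A) (Ioc A B ∪ Ioi B) := by
    rw [Ioc_union_Ioi_eq_Ioi hAB]; exact Ioc_disjoint_Ioi le_rfl
  have hGint : IntegrableOn G (Ioi (0:ℝ)) := by
    rw [hsplit]; exact hI1.union (hI2.union hI3)
  -- integral monotonicity
  have hmono : (∫ s in Ioi (0:ℝ), F s) ≤ ∫ s in Ioi (0:ℝ), G s :=
    integral_mono_of_nonneg (Filter.Eventually.of_forall hF0) hGint
      ((ae_restrict_iff' measurableSet_Ioi).mpr (Filter.Eventually.of_forall hFG))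
  -- compute the integral of G
  have hsum : (∫ s in Ioi (0:ℝ), G s)
      = (∫ s in Ioc (0:ℝ) A, G s) + ((∫ s in Ioc A B, G s) + ∫ s in Ioi B, G s) := by
    rw [hsplit, setIntegral_union disj1 (measurableSet_Ioc.union measurableSet_Ioi)
      hI1 (hI2.union hI3), setIntegral_union disj2 measurableSet_Ioi hI2 hI3]
  have v1 : (∫ s in Ioc (0:ℝ) A, G s) = A * Real.exp (r * (a + 1)) := by
    rw [setIntegral_congr_fun measurableSet_Ioc hG1, setIntegral_const]
    rw [Real.volume_real_Ioc_of_le hA0.le, smul_eq_mul]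
    ring
  have v2 : (∫ s in Ioc A B, G s) = (B ^ (-a) - A ^ (-a)) / (-a) := by
    rw [setIntegral_congr_fun measurableSet_Ioc hG2, ← intervalIntegral.integral_of_le hAB,
      integral_rpow (Or.inr ⟨by intro h; apply hane; linarith [neg_eq_iff_eq_neg.mp h],
        notMem_uIcc_of_lt hA0 hB0⟩)]
    have h' : -(a + 1) + 1 = -a := by ring
    rw [h']
  have v3 : (∫ s in Ioi B, G s) = Real.exp (r * (1 - a)) * B ^ (-1 : ℝ) := by
    rw [setIntegral_congr_fun measurableSet_Ioi hG3, integral_const_mul _ _,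
      integral_Ioi_rpow_of_lt (by norm_num) hB0]
    norm_num
  -- bound the three terms by M := exp (2 m r)
  set M : ℝ := Real.exp (2 * m * r) with hM
  have hM0 : 0 < M := exp_pos _
  have haub : a ≤ 2 * m := by rw [ha]; linarith
  have halb : -(2 * m) ≤ a := by rw [ha]; linarith
  have b1 : A * Real.exp (r * (a + 1)) ≤ M := by
    rw [hA, hM, ← Real.exp_add]
    apply Real.exp_le_exp.mpr
    nlinarith [mul_le_mul_of_nonneg_right haub hr0.le]
  have hBna : B ^ (-a) = Real.exp (-(a * r)) := by
    rw [hB, ← Real.exp_mul]; congr 1; ring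
  have hAna : A ^ (-a) = Real.exp (a * r) := by
    rw [hA, ← Real.exp_mul]; congr 1; ring
  have b3 : Real.exp (r * (1 - a)) * B ^ (-1 : ℝ) ≤ M := by
    rw [hB, ← Real.exp_mul, ← Real.exp_add, hM]
    apply Real.exp_le_exp.mpr
    nlinarith [mul_le_mul_of_nonneg_right halb hr0.le]
  have b2 : (B ^ (-a) - A ^ (-a)) / (-a) ≤ M / (2 * m) := by
    rw [hBna, hAna]
    rcases lt_or_gt_of_ne hane with hneg | hpos
    · -- a < 0 : |a| = -a = 2m
      have h2m : 2 * m = -a := by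
        rw [hm, ha]
        rw [abs_of_neg (by linarith : l < 0)]; ring
      have hMeq : M = Real.exp (-(a * r)) := by
        rw [hM]; congr 1; rw [h2m]; ring
      have hden : (0:ℝ) < -a := by linarith
      rw [hMeq, h2m, div_le_div_iff₀ hden hden]
      nlinarith [Real.exp_pos (a * r), mul_pos (Real.exp_pos (a * r)) hden]
    · -- a > 0 : 2m = a
      have h2m : 2 * m = a := by
        rw [hm, ha]
        rw [abs_of_pos (by linarith : 0 < l)]
      have hMeq : M = Real.exp (a * r) := by
        rw [hM]; congr 1; rw [h2m]
      have hden : (0:ℝ) < a := by linarith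
      rw [hMeq, h2m, div_neg, ← neg_div, neg_sub, div_le_div_iff₀ hden hden]
      nlinarith [Real.exp_pos (-(a * r)), mul_pos (Real.exp_pos (-(a * r))) hden]
  -- conclusion
  have hRHS : Real.exp (-r * (1 - 2 * m)) = Real.exp (-r) * M := by
    rw [hM, ← Real.exp_add]; congr 1; ring
  have hGsum : (∫ s in Ioi (0:ℝ), G s) ≤ M + (M / (2 * m) + M) := by
    rw [hsum, v1, v2, v3]
    exact add_le_add b1 (add_le_add b2 b3)
  have hP0 : (0:ℝ) < Real.exp (-r) := exp_pos _
  calc Real.exp (-r) * ∫ t : ℝ, (E + t ^ 2) ^ p * (1 + E * t ^ 2) ^ q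
      = Real.exp (-r) * (2 * ∫ s in Ioi (0:ℝ), F s) := by rw [key]
    _ ≤ Real.exp (-r) * (2 * (M + (M / (2 * m) + M))) := by
        apply mul_le_mul_of_nonneg_left _ hP0.le
        apply mul_le_mul_of_nonneg_left _ (by norm_num)
        exact hmono.trans hGsum
    _ ≤ (3 / m) * Real.exp (-r * (1 - 2 * m)) := by
        rw [hRHS]
        set c : ℝ := Real.exp (-r) * M with hc
        have hc0 : 0 < c := mul_pos hP0 hM0
        have e1 : Real.exp (-r) * (2 * (M + (M / (2 * m) + M))) = (4 * c * m + c) / m := by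
          rw [hc]; field_simp; ring
        have e2 : (3 / m) * (Real.exp (-r) * M) = (3 * c) / m := by
          rw [hc]; ring
        rw [e1, e2, div_le_div_iff₀ hm0 hm0]
        nlinarith [mul_le_mul_of_nonneg_left (by linarith : 4 * m ≤ 2) (mul_pos hc0 hm0).le]
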